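/- For the Pacanowski–Philander model R-2-1-3 with α1, β1, α2 > 0 and Q < 0 (so C > 0), there exists at least one R ≥ 0 solving f1(R)²/f2(R) = C·R, where f1(R) = α1 + β1/(1+5R)² and f2(R) = α2 + α1/(1+5R) + β1/(1+5R)³. -/

import Mathlib

theorem stmt_17 (α1 β1 α2 C : ℝ) (h1 : 0 < α1) (h2 : 0 < β1) (h3 : 0 < α2)
    (hC : 0 < C) :
    ∃ R : ℝ, 0 ≤ R ∧
      (α1 + β1 / (1 + 5 * R) ^ 2) ^ 2
        / (α2 + α1 / (1 + 5 * R) + β1 / (1 + 5 * R) ^ 3) = C * R := by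
  set k : ℝ → ℝ := fun R =>
    (α1 + β1 / (1 + 5 * R) ^ 2) ^ 2
      / (α2 + α1 / (1 + 5 * R) + β1 / (1 + 5 * R) ^ 3) with hk
  set F : ℝ → ℝ := fun R => C * R - k R with hF
  set M : ℝ := ((α1 + β1) ^ 2 / α2 + 1) / C with hM
  have hMpos : 0 < M := by positivity
  -- positivity facts for R ≥ 0
  have hbase : ∀ R : ℝ, 0 ≤ R → (0:ℝ) < 1 + 5 * R := by intro R hR; linarith
  have hden : ∀ R : ℝ, 0 ≤ R →
      0 < α2 + α1 / (1 + 5 * R) + β1 / (1 + 5 * R) ^ 3 := by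
    intro R hR
    have := hbase R hR
    positivity
  -- F continuous on Icc 0 M
  have hcont : ContinuousOn F (Set.Icc 0 M) := by
    apply ContinuousOn.sub (by fun_prop)
    apply ContinuousOn.div
    · apply ContinuousOn.pow
      apply ContinuousOn.add continuousOn_const
      apply ContinuousOn.div continuousOn_const (by fun_prop)
      intro x hx
      have := hbase x hx.1
      positivity
    · apply ContinuousOn.add
      apply ContinuousOn.add continuousOn_const
      · apply ContinuousOn.div continuousOn_const (by fun_prop)
        intro x hx
        have := hbase x hx.1
        positivity
      · apply ContinuousOn.div continuousOn_const (by fun_prop)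
        intro x hx
        have := hbase x hx.1
        positivity
    · intro x hx
      exact (hden x hx.1).ne'
  have hF0 : F 0 ≤ 0 := by
    have : 0 < k 0 := by
      have := hden 0 le_rfl
      simp only [hk]
      positivity
    simp only [hF]
    linarith
  have hFM : 0 ≤ F M := by
    have hb := hbase M hMpos.le
    have hb1 : (1:ℝ) ≤ 1 + 5 * M := by linarith
    have hnum : (α1 + β1 / (1 + 5 * M) ^ 2) ^ 2 ≤ (α1 + β1) ^ 2 := by
      have : β1 / (1 + 5 * M) ^ 2 ≤ β1 := by
        rw [div_le_iff₀ (by positivity)]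
        have h1' : (1:ℝ) ≤ (1 + 5 * M) ^ 2 := by nlinarith
        nlinarith
      have h0 : 0 ≤ α1 + β1 / (1 + 5 * M) ^ 2 := by positivity
      nlinarith
    have hd : α2 ≤ α2 + α1 / (1 + 5 * M) + β1 / (1 + 5 * M) ^ 3 := by
      have : 0 ≤ α1 / (1 + 5 * M) := by positivity
      have : 0 ≤ β1 / (1 + 5 * M) ^ 3 := by positivity
      linarith [show (0:ℝ) ≤ α1 / (1 + 5 * M) by positivity]
    have hkM : k M ≤ (α1 + β1) ^ 2 / α2 := by
      simp only [hk]
      exact div_le_div₀ (by positivity) hnum h3 hd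
    have hCM : C * M = (α1 + β1) ^ 2 / α2 + 1 := by
      rw [hM]
      field_simp
    simp only [hF]
    rw [hCM]
    linarith
  have hmem : (0:ℝ) ∈ Set.Icc (F 0) (F M) := ⟨hF0, hFM⟩
  obtain ⟨R, hR, hFR⟩ := intermediate_value_Icc hMpos.le hcont hmem
  refine ⟨R, hR.1, ?_⟩
  simp only [hF] at hFR
  have : k R = C * R := by linarith
  simpa [hk] using this
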